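/- For real z > 0, a > −1 and real u with u < a + 1, the integral ∫₀^∞ x^{a−u} e^{−x}/(z+x) dx equals e^z Γ(a+1−u) z^{a−u} Γ(u−a, z), where Γ(s, z) = ∫_z^∞ t^{s−1} e^{−t} dt is the upper incomplete gamma function. -/
import Mathlib

open MeasureTheory Set

/-- The upper incomplete gamma function `Γ(s, z) = ∫_z^∞ t^(s-1) e^(-t) dt`. -/
noncomputable def upperIncGamma (s z : ℝ) : ℝ :=
  ∫ t in Ioi z, t ^ (s - 1) * Real.exp (-t)

lemma integral_Ioi_comp_add (g : ℝ → ℝ) (a d : ℝ) :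
    ∫ x in Ioi a, g (x + d) = ∫ x in Ioi (a + d), g x := by
  calc ∫ x in Ioi a, g (x + d)
      = ∫ x, (Ioi a).indicator (fun x => g (x + d)) x :=
        (integral_indicator measurableSet_Ioi).symm
    _ = ∫ x, (Ioi (a + d)).indicator g (x + d) := by
        congr 1; ext x
        simp only [indicator_apply, mem_Ioi, add_lt_add_iff_right]
    _ = ∫ x, (Ioi (a + d)).indicator g x := integral_add_right_eq_self _ d
    _ = ∫ x in Ioi (a + d), g x := integral_indicator measurableSet_Ioi

/-- The slice in `s`: `∫₀^∞ e^{-(z+x)s} ds = (z+x)⁻¹`. -/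
lemma aux_slice_s (z p x : ℝ) (hx : 0 < x) (hzx : 0 < z + x) :
    (∫ s in Ioi (0:ℝ), x ^ p * Real.exp (-x) * Real.exp (-((z + x) * s)))
      = x ^ p * Real.exp (-x) * (z + x)⁻¹ := by
  rw [integral_const_mul]
  congr 1
  have := integral_comp_mul_left_Ioi (fun y => Real.exp (-y)) 0 hzx
  simp only [mul_zero, integral_exp_neg_Ioi, neg_zero, Real.exp_zero,
    smul_eq_mul, mul_one] at this
  exact this

/-- Integrability of the density `x^p e^{-x} (z+x)⁻¹` on `(0,∞)`. -/
lemma aux_dens_integrable (z p : ℝ) (hz : 0 < z) (hp : 0 < p + 1) :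
    IntegrableOn (fun x : ℝ => x ^ p * Real.exp (-x) * (z + x)⁻¹) (Ioi 0) := by
  have hbase : IntegrableOn (fun x : ℝ => z⁻¹ * (Real.exp (-x) * x ^ ((p + 1) - 1)))
      (Ioi 0) := (Real.GammaIntegral_convergent hp).const_mul _
  refine Integrable.mono' hbase ?_ ?_
  · apply Measurable.aestronglyMeasurable
    exact ((measurable_id.pow_const p).mul measurable_id.neg.exp).mul
      (measurable_const.add measurable_id).inv
  · filter_upwards [ae_restrict_mem measurableSet_Ioi] with x hx
    have hx0 : (0:ℝ) < x := hx
    have hzx : 0 < z + x := by linarith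
    have hle : (z + x)⁻¹ ≤ z⁻¹ := by
      apply inv_anti₀ hz; linarith
    have h1 : x ^ p * Real.exp (-x) * (z + x)⁻¹ ≤ z⁻¹ * (Real.exp (-x) * x ^ p) := by
      calc x ^ p * Real.exp (-x) * (z + x)⁻¹
          ≤ x ^ p * Real.exp (-x) * z⁻¹ := by
            apply mul_le_mul_of_nonneg_left hle
            positivity
        _ = z⁻¹ * (Real.exp (-x) * x ^ p) := by ring
    have hnn : 0 ≤ x ^ p * Real.exp (-x) * (z + x)⁻¹ := by positivity
    rw [Real.norm_eq_abs, abs_of_nonneg hnn]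
    simpa using h1

/-- Fubini/Tonelli: integrability on the product. -/
lemma aux_prod_integrable (z p : ℝ) (hz : 0 < z) (hp : 0 < p + 1) :
    Integrable
      (Function.uncurry fun x s => x ^ p * Real.exp (-x) * Real.exp (-((z + x) * s)))
      ((volume.restrict (Ioi (0:ℝ))).prod (volume.restrict (Ioi (0:ℝ)))) := by
  have hmeas : AEStronglyMeasurable
      (Function.uncurry fun x s : ℝ => x ^ p * Real.exp (-x) * Real.exp (-((z + x) * s)))
      ((volume.restrict (Ioi (0:ℝ))).prod (volume.restrict (Ioi (0:ℝ)))) := by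
    apply Measurable.aestronglyMeasurable
    apply Measurable.mul
    · exact (measurable_fst.pow_const p).mul measurable_fst.neg.exp
    · exact (((measurable_const.add measurable_fst).mul measurable_snd).neg).exp
  rw [integrable_prod_iff hmeas]
  constructor
  · filter_upwards [ae_restrict_mem measurableSet_Ioi] with x hx
    have hx0 : (0:ℝ) < x := hx
    have hzx : 0 < z + x := by linarith
    have h0 : IntegrableOn (fun s => Real.exp (-(z + x) * s)) (Ioi 0) :=
      exp_neg_integrableOn_Ioi 0 hzx
    have h1 := h0.const_mul (x ^ p * Real.exp (-x))
    refine h1.congr (ae_of_all _ fun s => ?_)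
    simp only [Function.uncurry]
    congr 2
    ring
  · refine (aux_dens_integrable z p hz hp).congr ?_
    filter_upwards [ae_restrict_mem measurableSet_Ioi] with x hx
    have hx0 : (0:ℝ) < x := hx
    have hzx : 0 < z + x := by linarith
    have hnorm : ∀ s : ℝ,
        ‖x ^ p * Real.exp (-x) * Real.exp (-((z + x) * s))‖
          = x ^ p * Real.exp (-x) * Real.exp (-((z + x) * s)) := by
      intro s
      have hxp : (0:ℝ) ≤ x ^ p := Real.rpow_nonneg hx0.le p
      rw [Real.norm_eq_abs, abs_of_nonneg (by positivity)]
    simp only [Function.uncurry]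
    simp_rw [hnorm]
    exact (aux_slice_s z p x hx0 hzx).symm

/-- The slice in `x`: the Gamma integral. -/
lemma aux_slice_x (z p s : ℝ) (hp : 0 < p + 1) (hs : 0 < s) :
    (∫ x in Ioi (0:ℝ), x ^ p * Real.exp (-x) * Real.exp (-((z + x) * s)))
      = Real.exp (-(z * s)) * ((1 / (1 + s)) ^ (p + 1) * Real.Gamma (p + 1)) := by
  have h1s : (0:ℝ) < 1 + s := by linarith
  have : (∫ x in Ioi (0:ℝ), x ^ p * Real.exp (-x) * Real.exp (-((z + x) * s)))
      = ∫ x in Ioi (0:ℝ),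
          Real.exp (-(z * s)) * (x ^ ((p + 1) - 1) * Real.exp (-((1 + s) * x))) := by
    refine setIntegral_congr_fun measurableSet_Ioi fun x hx => ?_
    simp only [add_sub_cancel_right]
    have hexp : Real.exp (-x) * Real.exp (-((z + x) * s))
        = Real.exp (-(z * s)) * Real.exp (-((1 + s) * x)) := by
      rw [← Real.exp_add, ← Real.exp_add]; congr 1; ring
    rw [mul_assoc, hexp]; ring
  rw [this, integral_const_mul, Real.integral_rpow_mul_exp_neg_mul_Ioi hp h1s]

/-- The substitution `t = z(1+s)`. -/
lemma aux_subst (z p : ℝ) (hz : 0 < z) :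
    (∫ s in Ioi (0:ℝ),
        Real.exp (-(z * s)) * ((1 / (1 + s)) ^ (p + 1) * Real.Gamma (p + 1)))
      = Real.Gamma (p + 1) * (Real.exp z * z ^ (p + 1)) *
          (z⁻¹ * ∫ t in Ioi z, t ^ (-(p + 1)) * Real.exp (-t)) := by
  have step4 : ∀ s ∈ Ioi (0:ℝ),
      Real.exp (-(z * s)) * ((1 / (1 + s)) ^ (p + 1) * Real.Gamma (p + 1))
      = Real.Gamma (p + 1) * (Real.exp z * z ^ (p + 1)) *
          ((z * s + z) ^ (-(p + 1)) * Real.exp (-(z * s + z))) := by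
    intro s hs
    have hs0 : (0:ℝ) < s := hs
    have h1s : (0:ℝ) < 1 + s := by linarith
    have hsum : z * s + z = z * (1 + s) := by ring
    rw [hsum]
    have hmul : (z * (1 + s)) ^ (-(p + 1)) = z ^ (-(p + 1)) * (1 + s) ^ (-(p + 1)) :=
      Real.mul_rpow hz.le h1s.le
    rw [hmul]
    have hdiv : (1 / (1 + s)) ^ (p + 1) = (1 + s) ^ (-(p + 1)) := by
      rw [one_div, Real.inv_rpow h1s.le, ← Real.rpow_neg h1s.le]
    rw [hdiv]
    have hzinv : z ^ (p + 1) * z ^ (-(p + 1)) = 1 := by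
      rw [← Real.rpow_add hz, show p + 1 + -(p + 1) = (0:ℝ) by ring, Real.rpow_zero]
    have hexp : Real.exp z * Real.exp (-(z * (1 + s))) = Real.exp (-(z * s)) := by
      rw [← Real.exp_add]; congr 1; ring
    calc Real.exp (-(z * s)) * ((1 + s) ^ (-(p + 1)) * Real.Gamma (p + 1))
        = Real.Gamma (p + 1) * (z ^ (p + 1) * z ^ (-(p + 1))) *
            ((1 + s) ^ (-(p + 1)) * (Real.exp z * Real.exp (-(z * (1 + s))))) := by
          rw [hzinv, hexp]; ring
      _ = Real.Gamma (p + 1) * (Real.exp z * z ^ (p + 1)) *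
            (z ^ (-(p + 1)) * (1 + s) ^ (-(p + 1)) * Real.exp (-(z * (1 + s)))) := by ring
  rw [setIntegral_congr_fun measurableSet_Ioi step4, integral_const_mul]
  congr 1
  -- `∫ s in Ioi 0, G (z * s) = z⁻¹ * ∫ t in Ioi z, ...` where `G y = (y+z)^(-(p+1)) e^{-(y+z)}`
  have hcomp := integral_comp_mul_left_Ioi
    (fun y => (y + z) ^ (-(p + 1)) * Real.exp (-(y + z))) 0 hz
  rw [mul_zero] at hcomp
  rw [hcomp, smul_eq_mul]
  congr 1
  have htrans := integral_Ioi_comp_add (fun t => t ^ (-(p + 1)) * Real.exp (-t)) 0 z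
  rw [zero_add] at htrans
  exact htrans

theorem cauchy_transform_incgamma (z a u : ℝ) (hz : 0 < z) (ha : -1 < a)
    (hu : u < a + 1) :
    (∫ x in Ioi (0:ℝ), x ^ (a - u) * Real.exp (-x) / (z + x))
    = Real.exp z * Real.Gamma (a + 1 - u) * z ^ (a - u) * upperIncGamma (u - a) z := by
  have hp : 0 < (a - u) + 1 := by linarith
  have step1 : (∫ x in Ioi (0:ℝ), x ^ (a - u) * Real.exp (-x) / (z + x))
      = ∫ x in Ioi (0:ℝ), ∫ s in Ioi (0:ℝ),
          x ^ (a - u) * Real.exp (-x) * Real.exp (-((z + x) * s)) := by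
    refine setIntegral_congr_fun measurableSet_Ioi fun x hx => ?_
    have hx0 : (0:ℝ) < x := hx
    have hzx : 0 < z + x := by linarith
    rw [aux_slice_s z (a - u) x hx0 hzx, div_eq_mul_inv]
  have step2 := integral_integral_swap (aux_prod_integrable z (a - u) hz hp)
  have step3 : (∫ s in Ioi (0:ℝ), ∫ x in Ioi (0:ℝ),
        x ^ (a - u) * Real.exp (-x) * Real.exp (-((z + x) * s)))
      = ∫ s in Ioi (0:ℝ),
          Real.exp (-(z * s)) * ((1 / (1 + s)) ^ ((a - u) + 1) * Real.Gamma ((a - u) + 1)) :=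
    setIntegral_congr_fun measurableSet_Ioi fun s hs => aux_slice_x z (a - u) s hp hs
  rw [step1, step2, step3, aux_subst z (a - u) hz]
  have hGamma : Real.Gamma (a + 1 - u) = Real.Gamma ((a - u) + 1) := by
    congr 1; ring
  have hUIG : upperIncGamma (u - a) z
      = ∫ t in Ioi z, t ^ (-((a - u) + 1)) * Real.exp (-t) := by
    rw [upperIncGamma]
    refine setIntegral_congr_fun measurableSet_Ioi fun t ht => ?_
    congr 2
    ring
  rw [hGamma, hUIG]
  have hzp : z ^ ((a - u) + 1) * z⁻¹ = z ^ (a - u) := by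
    rw [Real.rpow_add hz, Real.rpow_one]
    field_simp
  calc Real.Gamma ((a - u) + 1) * (Real.exp z * z ^ ((a - u) + 1)) *
        (z⁻¹ * ∫ t in Ioi z, t ^ (-((a - u) + 1)) * Real.exp (-t))
      = Real.exp z * Real.Gamma ((a - u) + 1) * (z ^ ((a - u) + 1) * z⁻¹) *
        ∫ t in Ioi z, t ^ (-((a - u) + 1)) * Real.exp (-t) := by ring
    _ = Real.exp z * Real.Gamma ((a - u) + 1) * z ^ (a - u) *
        ∫ t in Ioi z, t ^ (-((a - u) + 1)) * Real.exp (-t) := by rw [hzp]
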